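/- Reduction of the comparison principle to the zero maximum principle: Let X ⊂ ℝⁿ be open, Ω a bounded open set with closure contained in X, 𝓕 ⊂ J²(X) a subequation, and M ⊂ J² a monotonicity cone subequation. Assume (i) the subharmonic addition formula holds on Ω: if u ∈ USC(Ω) is 𝓕-subharmonic on Ω and v ∈ USC(Ω) is \widetilde{𝓕}-subharmonic on Ω then u + v is \widetilde{M}-subharmonic on Ω; and (ii) the zero maximum principle holds for \widetilde{M} on the closure of Ω: every z ∈ USC(closure Ω) which is \widetilde{M}-subharmonic on Ω and satisfies z ≤ 0 on ∂Ω satisfies z ≤ 0 on Ω. Then the comparison principle holds: if u ∈ USC(closure Ω) is 𝓕-subharmonic on Ω, w ∈ LSC(closure Ω) is 𝓕-superharmonic on Ω, and u ≤ w on ∂Ω, then u ≤ w on Ω. -/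
import Mathlib


open Set Filter Topology Bornology
open scoped Pointwise

noncomputable section

/-- Euclidean space `ℝⁿ`. -/
abbrev En (n : ℕ) : Type := EuclideanSpace ℝ (Fin n)

/-- The space `S(n)` of real symmetric `n×n` matrices. -/
abbrev SymMat (n : ℕ) : Type := selfAdjoint (Matrix (Fin n) (Fin n) ℝ)

/-- The (constant coefficient) 2-jet space `J² = ℝ × ℝⁿ × S(n)`. -/
abbrev Jet (n : ℕ) : Type := ℝ × En n × SymMat n

/-- `P ≥ 0`, i.e. `P` is positive semidefinite. -/
def PSD {n : ℕ} (P : SymMat n) : Prop := (P : Matrix (Fin n) (Fin n) ℝ).PosSemidef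

/-- The Hessian matrix `D²φ(x)` of `φ` at `x`. -/
def hess {n : ℕ} (φ : En n → ℝ) (x : En n) : Matrix (Fin n) (Fin n) ℝ :=
  Matrix.of fun i j =>
    iteratedFDeriv ℝ 2 φ x ![EuclideanSpace.single i (1 : ℝ), EuclideanSpace.single j (1 : ℝ)]

/-- `J ∈ J^{2,+}_x u`: `J = (φ(x), Dφ(x), D²φ(x))` for some `C²` function `φ` defined near
`x` (inside `X`) with `u ≤ φ` near `x` and `u(x) = φ(x)`. -/
def IsUpperTestJet {n : ℕ} (X : Set (En n)) (u : En n → EReal) (x : En n) (J : Jet n) : Prop :=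
  ∃ φ : En n → ℝ, ∃ V : Set (En n), IsOpen V ∧ x ∈ V ∧ V ⊆ X ∧ ContDiffOn ℝ 2 φ V ∧
    (∀ y ∈ V, u y ≤ (φ y : EReal)) ∧ u x = (φ x : EReal) ∧
    J.1 = φ x ∧ J.2.1 = gradient φ x ∧ (J.2.2 : Matrix (Fin n) (Fin n) ℝ) = hess φ x

/-- `J ∈ J^{2,-}_x u`: `J = (φ(x), Dφ(x), D²φ(x))` for some `C²` function `φ` defined near
`x` (inside `X`) with `u ≥ φ` near `x` and `u(x) = φ(x)`. -/
def IsLowerTestJet {n : ℕ} (X : Set (En n)) (u : En n → EReal) (x : En n) (J : Jet n) : Prop :=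
  ∃ φ : En n → ℝ, ∃ V : Set (En n), IsOpen V ∧ x ∈ V ∧ V ⊆ X ∧ ContDiffOn ℝ 2 φ V ∧
    (∀ y ∈ V, (φ y : EReal) ≤ u y) ∧ u x = (φ x : EReal) ∧
    J.1 = φ x ∧ J.2.1 = gradient φ x ∧ (J.2.2 : Matrix (Fin n) (Fin n) ℝ) = hess φ x

/-- The fiber `F_x` of a constraint set `F ⊆ J²(X) = X × J²`. -/
def fiber {n : ℕ} (F : Set (En n × Jet n)) (x : En n) : Set (Jet n) := {J | (x, J) ∈ F}

/-- `u ∈ USC(X)`: upper semicontinuous on `X` with values in `[-∞, ∞)`. -/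
def USCOn {n : ℕ} (u : En n → EReal) (X : Set (En n)) : Prop :=
  UpperSemicontinuousOn u X ∧ ∀ x ∈ X, u x < ⊤

/-- `u ∈ LSC(X)`: lower semicontinuous on `X` with values in `(-∞, ∞]`. -/
def LSCOn {n : ℕ} (u : En n → EReal) (X : Set (En n)) : Prop :=
  LowerSemicontinuousOn u X ∧ ∀ x ∈ X, ⊥ < u x

/-- A subequation (constraint set) `F ⊆ X × J²`, i.e. a set satisfying the positivity
property (P), the negativity property (N) and the topological stability conditions (T)
(closures and interiors of `F` being taken relative to `J²(X) = X × J²`). -/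
structure IsSubequation {n : ℕ} (X : Set (En n)) (F : Set (En n × Jet n)) : Prop where
  subset : F ⊆ X ×ˢ (univ : Set (Jet n))
  pos : ∀ x ∈ X, ∀ J ∈ fiber F x, ∀ P : SymMat n, PSD P →
    (J.1, J.2.1, J.2.2 + P) ∈ fiber F x
  neg : ∀ x ∈ X, ∀ J ∈ fiber F x, ∀ s : ℝ, s ≤ 0 →
    (J.1 + s, J.2.1, J.2.2) ∈ fiber F x
  top1 : F = closure (interior F) ∩ (X ×ˢ (univ : Set (Jet n)))
  top2 : ∀ x ∈ X, fiber (interior F) x = interior (fiber F x)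
  top3 : ∀ x ∈ X, fiber F x = closure (interior (fiber F x))

/-- `u` is `F`-subharmonic on `X`: all upper test jets lie in the fibers of `F`. -/
def IsFSubharmonicOn {n : ℕ} (F : Set (En n × Jet n)) (u : En n → EReal)
    (X : Set (En n)) : Prop :=
  ∀ x ∈ X, ∀ J : Jet n, IsUpperTestJet X u x J → J ∈ fiber F x

/-- `w` is `F`-superharmonic on `X`: all lower test jets lie in `(Int (F_x))ᶜ`. -/
def IsFSuperharmonicOn {n : ℕ} (F : Set (En n × Jet n)) (w : En n → EReal)
    (X : Set (En n)) : Prop :=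
  ∀ x ∈ X, ∀ J : Jet n, IsLowerTestJet X w x J → J ∉ interior (fiber F x)

/-- A constant coefficient subequation `F ⊆ J²`: closed, `F = closure (interior F)`, and
satisfying the positivity property (P) and negativity property (N). -/
def IsCCSubequation {n : ℕ} (F : Set (Jet n)) : Prop :=
  IsClosed F ∧ F = closure (interior F) ∧
  (∀ J ∈ F, ∀ P : SymMat n, PSD P → (J.1, J.2.1, J.2.2 + P) ∈ F) ∧
  (∀ J ∈ F, ∀ s : ℝ, s ≤ 0 → (J.1 + s, J.2.1, J.2.2) ∈ F)

/-- A monotonicity cone subequation: a constant coefficient subequation which is also a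
convex cone with vertex at the origin. -/
def IsMonotonicityConeSubequation {n : ℕ} (M : Set (Jet n)) : Prop :=
  IsCCSubequation M ∧ Convex ℝ M ∧ (0 : Jet n) ∈ M ∧
  (∀ t : ℝ, 0 ≤ t → ∀ J ∈ M, t • J ∈ M)

/-- The Dirichlet dual `(−interior S)ᶜ` of a constant coefficient set `S ⊆ J²`. -/
def dualJ {n : ℕ} (S : Set (Jet n)) : Set (Jet n) := (-(interior S))ᶜ

/-- The Dirichlet dual `(−Int F)ᶜ` of a constraint set `F ⊆ X × J²`, with the complement
taken in `J²(X) = X × J²` and the negation acting fiberwise on the jet variables. -/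
def dualSubeq {n : ℕ} (X : Set (En n)) (F : Set (En n × Jet n)) : Set (En n × Jet n) :=
  (X ×ˢ (univ : Set (Jet n))) \ {q | (q.1, -q.2) ∈ interior F}

/-- `u` is `S`-subharmonic on `X` for a constant coefficient set `S ⊆ J²`. -/
def CCSubharmonicOn {n : ℕ} (S : Set (Jet n)) (u : En n → EReal) (X : Set (En n)) : Prop :=
  ∀ x ∈ X, ∀ J : Jet n, IsUpperTestJet X u x J → J ∈ S

/-- Reduction of the comparison principle to the zero maximum principle via subharmonic
addition. -/
theorem statement_16 {n : ℕ} (X : Set (En n)) (hX : IsOpen X)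
    (Ω : Set (En n)) (hΩ : IsOpen Ω) (hΩb : IsBounded Ω) (hΩX : closure Ω ⊆ X)
    (F : Set (En n × Jet n)) (hF : IsSubequation X F)
    (M : Set (Jet n)) (hM : IsMonotonicityConeSubequation M)
    (hAdd : ∀ u v : En n → EReal, USCOn u Ω → USCOn v Ω →
      IsFSubharmonicOn F u Ω → IsFSubharmonicOn (dualSubeq X F) v Ω →
      CCSubharmonicOn (dualJ M) (fun x => u x + v x) Ω)
    (hZMP : ∀ z : En n → EReal, USCOn z (closure Ω) →
      CCSubharmonicOn (dualJ M) z Ω → (∀ x ∈ frontier Ω, z x ≤ 0) → ∀ x ∈ Ω, z x ≤ 0)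
    (u w : En n → EReal) (hu : USCOn u (closure Ω)) (hw : LSCOn w (closure Ω))
    (husub : IsFSubharmonicOn F u Ω) (hwsup : IsFSuperharmonicOn F w Ω)
    (hbd : ∀ x ∈ frontier Ω, u x ≤ w x) :
    ∀ x ∈ Ω, u x ≤ w x := by
  -- Set v := -w
  set v : En n → EReal := fun x => -(w x) with hv
  have hclΩ : Ω ⊆ closure Ω := subset_closure
  have hΩX' : Ω ⊆ X := fun x hx => hΩX (hclΩ hx)
  -- v is USC on closure Ω
  have hvUSC : USCOn v (closure Ω) := by
    constructor
    · intro x hx y hy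
      have h1 : -y < w x := by
        have := EReal.neg_lt_neg_iff.mpr hy
        rwa [neg_neg] at this
      filter_upwards [hw.1 x hx (-y) h1] with z hz
      have := EReal.neg_lt_neg_iff.mpr hz
      rwa [neg_neg] at this
    · intro x hx
      have := hw.2 x hx
      simpa [hv] using EReal.neg_lt_neg_iff.mpr this
  -- v is dual-F-subharmonic on Ω
  have hvsub : IsFSubharmonicOn (dualSubeq X F) v Ω := by
    intro x hx J hJ
    obtain ⟨φ, V, hVo, hxV, hVX, hφ, hle, heq, hJ1, hJ2, hJ3⟩ := hJ
    have hxX : x ∈ X := hΩX' hx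
    refine ⟨⟨hxX, mem_univ _⟩, ?_⟩
    intro hmem
    -- hmem : (x, -J) ∈ interior F
    have hmem' : -J ∈ interior (fiber F x) := by
      rw [← hF.top2 x hxX]
      exact hmem
    -- -J is a lower test jet for w at x, via -φ
    have hltj : IsLowerTestJet Ω w x (-J) := by
      refine ⟨fun y => -(φ y), V, hVo, hxV, hVX, hφ.neg, ?_, ?_, ?_, ?_, ?_⟩
      · intro y hy
        have := hle y hy
        rw [EReal.coe_neg]
        exact EReal.neg_le.mp this
      · have : -(v x) = -((φ x : EReal)) := by rw [heq]
        rw [EReal.coe_neg]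
        simpa [hv, neg_neg] using this
      · show (-J).1 = -(φ x)
        simp [Prod.fst, hJ1]
      · show (-J).2.1 = gradient (fun y => -(φ y)) x
        have : gradient (fun y => -(φ y)) x = -(gradient φ x) := by
          simp [gradient, fderiv_neg]
        rw [this]
        simp [hJ2]
      · show (((-J).2.2 : SymMat n) : Matrix (Fin n) (Fin n) ℝ) = hess (fun y => -(φ y)) x
        have hh : hess (fun y => -(φ y)) x = -(hess φ x) := by
          funext i j
          simp only [hess, Matrix.of_apply, Matrix.neg_apply]
          have : (fun y => -(φ y)) = -φ := rfl
          rw [this, iteratedFDeriv_neg_apply]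
          rfl
        rw [hh]
        have : (((-J).2.2 : SymMat n) : Matrix (Fin n) (Fin n) ℝ)
            = -((J.2.2 : SymMat n) : Matrix (Fin n) (Fin n) ℝ) := rfl
        rw [this, hJ3]
    exact hwsup x hx (-J) hltj hmem'
  -- z := u + v is dual-M subharmonic on Ω
  have hzsub : CCSubharmonicOn (dualJ M) (fun x => u x + v x) Ω :=
    hAdd u v ⟨hu.1.mono hclΩ, fun x hx => hu.2 x (hclΩ hx)⟩
      ⟨hvUSC.1.mono hclΩ, fun x hx => hvUSC.2 x (hclΩ hx)⟩ husub hvsub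
  -- z is USC on closure Ω
  have hzUSC : USCOn (fun x => u x + v x) (closure Ω) := by
    constructor
    · refine hu.1.add' hvUSC.1 fun x hx => ?_
      exact EReal.continuousAt_add (Or.inl (hu.2 x hx).ne) (Or.inr (hvUSC.2 x hx).ne)
    · intro x hx
      exact EReal.add_lt_top (hu.2 x hx).ne (hvUSC.2 x hx).ne
  -- z ≤ 0 on ∂Ω
  have hfr : ∀ x ∈ frontier Ω, u x + v x ≤ 0 := by
    intro x hx
    have hxcl : x ∈ closure Ω := frontier_subset_closure hx
    have hwb : w x ≠ ⊥ := (hw.2 x hxcl).ne'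
    have : u x - w x ≤ 0 := by
      rw [EReal.sub_le_iff_le_add (Or.inl hwb) (Or.inr (by simp))]
      simpa using hbd x hx
    simpa [hv, sub_eq_add_neg] using this
  -- apply ZMP
  have hz0 := hZMP (fun x => u x + v x) hzUSC hzsub hfr
  intro x hx
  have h0 : u x - w x ≤ 0 := by
    have := hz0 x hx
    simpa [hv, sub_eq_add_neg] using this
  have hwb : w x ≠ ⊥ := (hw.2 x (hclΩ hx)).ne'
  have := (EReal.sub_le_iff_le_add (Or.inl hwb) (Or.inr (by simp))).mp h0
  simpa using this

end
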